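/- Let a > 0, b > 0 and k ≥ 1 be fixed real numbers, and let (ρ_n)_{n≥1} be a sequence of positive reals with ρ_n ≥ b/(b+n) for each n. If ρ_n(b+n) → ∞ as n → ∞, then ∫_0^∞ (1+g)^{−k/2} p_n^R(g) dg → 0 as n → ∞, where p_n^R(g) = a[ρ_n(b+n)]^a (g+b)^{−(a+1)} for g > ρ_n(b+n) − b and 0 otherwise. -/

import Mathlib

open MeasureTheory Filter Topology Real

/-- The mixing density of the robust prior for sample size `n`. -/
noncomputable def robustMixing (a b ρ : ℝ) (n : ℕ) (g : ℝ) : ℝ :=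
  if ρ * (b + n) - b < g then a * (ρ * (b + n)) ^ a * (g + b) ^ (-(a + 1)) else 0

/-- Shift a set integral on `Ioi`. -/
lemma integral_Ioi_shift (f : ℝ → ℝ) (T b : ℝ) :
    ∫ g in Set.Ioi T, f (g + b) = ∫ x in Set.Ioi (T + b), f x := by
  have hemb : MeasurableEmbedding (fun x : ℝ => x + b) :=
    (Homeomorph.addRight b).measurableEmbedding
  have hpre : (fun x : ℝ => x + b) ⁻¹' Set.Ioi (T + b) = Set.Ioi T := by
    ext x; simp [Set.mem_preimage]
  calc ∫ g in Set.Ioi T, f (g + b)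
      = ∫ x in (fun x : ℝ => x + b) ⁻¹' Set.Ioi (T + b), f (x + b) := by rw [hpre]
    _ = ∫ x in Set.Ioi (T + b), f x ∂(Measure.map (fun x : ℝ => x + b) volume) :=
        (hemb.setIntegral_map f (Set.Ioi (T + b))).symm
    _ = ∫ x in Set.Ioi (T + b), f x := by rw [map_add_right_eq_self]

/-- The density integrates to one. -/
lemma robust_density_integral {a b R : ℝ} (ha : 0 < a) (hR : 0 < R) :
    ∫ g in Set.Ioi (R - b), a * R ^ a * (g + b) ^ (-(a + 1)) = 1 := by
  have h1 : ∫ g in Set.Ioi (R - b), (g + b) ^ (-(a + 1))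
      = ∫ x in Set.Ioi R, x ^ (-(a + 1)) := by
    have := integral_Ioi_shift (fun x => x ^ (-(a + 1))) (R - b) b
    simpa using this
  rw [MeasureTheory.integral_const_mul, h1,
    integral_Ioi_rpow_of_lt (by linarith) hR]
  have he : -(a+1) + 1 = -a := by ring
  rw [he, Real.rpow_neg hR.le]
  have hRa : (0:ℝ) < R ^ a := Real.rpow_pos_of_pos hR a
  field_simp

lemma robust_density_integrable {a b R : ℝ} (ha : 0 < a) (hb : 0 < b) (hR : b < R) :
    IntegrableOn (fun g => a * R ^ a * (g + b) ^ (-(a + 1))) (Set.Ioi (R - b)) := by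
  apply Integrable.const_mul
  have hemb : MeasurableEmbedding (fun x : ℝ => x + b) :=
    (Homeomorph.addRight b).measurableEmbedding
  have hint : IntegrableOn (fun x : ℝ => x ^ (-(a+1))) (Set.Ioi R) :=
    integrableOn_Ioi_rpow_of_lt (by linarith) (hb.trans hR)
  have h0 : IntegrableOn (fun x : ℝ => x ^ (-(a+1))) (Set.Ioi R)
      (Measure.map (fun x => x + b) volume) := by
    rwa [map_add_right_eq_self volume b]
  have h2 := (hemb.integrableOn_map_iff (f := fun x : ℝ => x ^ (-(a+1)))
    (s := Set.Ioi R)).mp h0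
  have hpre : (fun x : ℝ => x + b) ⁻¹' Set.Ioi R = Set.Ioi (R - b) := by
    ext x; simp [Set.mem_preimage, lt_sub_iff_add_lt]
  rwa [hpre] at h2

/-- Corollary 1 of the paper (model selection consistency of the robust
prior): if `ρₙ(b+n) → ∞`, then `∫₀^∞ (1+g)^{-k/2} pₙᴿ(g) dg → 0`. -/
theorem robust_model_selection_consistency
    (a b k : ℝ) (ha : 0 < a) (hb : 0 < b) (hk : 1 ≤ k)
    (ρ : ℕ → ℝ) (hρ_pos : ∀ n, 0 < ρ n) (hρ : ∀ n : ℕ, 1 ≤ n → b / (b + n) ≤ ρ n)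
    (hlim : Tendsto (fun n : ℕ => ρ n * (b + n)) atTop atTop) :
    Tendsto
      (fun n : ℕ => ∫ g in Set.Ioi (0:ℝ), (1 + g) ^ (-k / 2) * robustMixing a b (ρ n) n g)
      atTop (𝓝 0) := by
  have hT : Tendsto (fun n : ℕ => (1 + (ρ n * (b + n) - b)) ^ (-k / 2)) atTop (𝓝 0) := by
    have h1 : Tendsto (fun n : ℕ => 1 + (ρ n * (b + n) - b)) atTop atTop := by
      apply tendsto_atTop_add_const_left
      exact tendsto_atTop_add_const_right _ _ hlim
    have h2 : Tendsto (fun x : ℝ => x ^ (-(k/2))) atTop (𝓝 0) :=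
      tendsto_rpow_neg_atTop (by linarith)
    have := h2.comp h1
    simpa [neg_div, Function.comp_def] using this
  refine squeeze_zero' ?_ ?_ hT
  · filter_upwards with n
    apply setIntegral_nonneg measurableSet_Ioi
    intro g hg
    simp only [Set.mem_Ioi] at hg
    apply mul_nonneg (Real.rpow_nonneg (by linarith) _)
    unfold robustMixing
    split_ifs with h
    · have hRn : 0 < ρ n * (b + n) := mul_pos (hρ_pos n) (by positivity)
      exact mul_nonneg (mul_nonneg ha.le (Real.rpow_nonneg hRn.le _))
        (Real.rpow_nonneg (by linarith) _)
    · exact le_refl 0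
  · have hev : ∀ᶠ n : ℕ in atTop, b < ρ n * (b + n) := hlim.eventually_gt_atTop b
    filter_upwards [hev] with n hn
    set R : ℝ := ρ n * (b + n) with hRdef
    have hRn : 0 < R := hb.trans hn
    have hT0 : 0 < R - b := by linarith
    set T : ℝ := R - b with hTdef
    set c : ℝ := (1 + T) ^ (-k / 2) with hcdef
    have hc0 : 0 < c := Real.rpow_pos_of_pos (by linarith) _
    have hint : IntegrableOn (fun g => a * R ^ a * (g + b) ^ (-(a + 1))) (Set.Ioi T) :=
      robust_density_integrable ha hb hn
    have hstep1 : ∫ g in Set.Ioi (0:ℝ), (1 + g) ^ (-k / 2) * robustMixing a b (ρ n) n g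
        = ∫ g in Set.Ioi T, (1 + g) ^ (-k / 2) * (a * R ^ a * (g + b) ^ (-(a + 1))) := by
      have hsupp : ∀ g ∈ Set.Ioi (0:ℝ),
          (1 + g) ^ (-k / 2) * robustMixing a b (ρ n) n g
          = (Set.Ioi T).indicator
              (fun g => (1 + g) ^ (-k / 2) * (a * R ^ a * (g + b) ^ (-(a + 1)))) g := by
        intro g _
        unfold robustMixing
        rw [Set.indicator_apply]
        by_cases h : T < g
        · rw [if_pos h, if_pos (show g ∈ Set.Ioi T from h)]
        · rw [if_neg h, if_neg (show g ∉ Set.Ioi T from h), mul_zero]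
      rw [setIntegral_congr_fun measurableSet_Ioi hsupp,
        setIntegral_indicator measurableSet_Ioi]
      have hI : Set.Ioi (0:ℝ) ∩ Set.Ioi T = Set.Ioi T :=
        Set.inter_eq_right.mpr (fun x hx => lt_trans hT0 hx)
      rw [hI]
    rw [hstep1]
    have hmain : ∫ g in Set.Ioi T, (1 + g) ^ (-k / 2) * (a * R ^ a * (g + b) ^ (-(a + 1)))
        ≤ ∫ g in Set.Ioi T, c * (a * R ^ a * (g + b) ^ (-(a + 1))) := by
      apply integral_mono_of_nonneg
      · rw [Filter.EventuallyLE, ae_restrict_iff' measurableSet_Ioi]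
        filter_upwards with g hg
        simp only [Set.mem_Ioi] at hg
        apply mul_nonneg (Real.rpow_nonneg (by linarith) _)
        exact mul_nonneg (mul_nonneg ha.le (Real.rpow_nonneg hRn.le _))
          (Real.rpow_nonneg (by linarith) _)
      · exact hint.const_mul c
      · rw [Filter.EventuallyLE, ae_restrict_iff' measurableSet_Ioi]
        filter_upwards with g hg
        simp only [Set.mem_Ioi] at hg
        apply mul_le_mul_of_nonneg_right
        · exact Real.rpow_le_rpow_of_nonpos (by linarith) (by linarith)
            (by rw [neg_div]; exact neg_nonpos_of_nonneg (by linarith))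
        · exact mul_nonneg (mul_nonneg ha.le (Real.rpow_nonneg hRn.le _))
            (Real.rpow_nonneg (by linarith) _)
    calc ∫ g in Set.Ioi T, (1 + g) ^ (-k / 2) * (a * R ^ a * (g + b) ^ (-(a + 1)))
        ≤ ∫ g in Set.Ioi T, c * (a * R ^ a * (g + b) ^ (-(a + 1))) := hmain
      _ = c * ∫ g in Set.Ioi T, a * R ^ a * (g + b) ^ (-(a + 1)) := integral_const_mul c _
      _ = c := by rw [hTdef, robust_density_integral ha hRn, mul_one]
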